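/- Let 0 ≤ l < u and d ∈ [l, u]. Then for every y ∈ [l, u]: (i) tanh(y) ≤ tanh(d) + (1 − tanh(d)²)(y − d) (the tangent line at d is an upper bound), and (ii) tanh(y) ≥ tanh(l) + ((tanh(u) − tanh(l))/(u − l))(y − l) (the chord through the endpoints is a lower bound). -/

import Mathlib

open Real Set

private lemma tanh_hasDerivAt (x : ℝ) :
    HasDerivAt Real.tanh (1 - Real.tanh x ^ 2) x := by
  have h := (Real.hasDerivAt_sinh x).div (Real.hasDerivAt_cosh x) (Real.cosh_pos x).ne'
  have hc := (Real.cosh_pos x).ne'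
  have hfun : (fun y => Real.sinh y / Real.cosh y) = Real.tanh := by
    funext y; rw [Real.tanh_eq_sinh_div_cosh]
  replace h : HasDerivAt (fun y => Real.sinh y / Real.cosh y) _ x := h
  rw [hfun] at h
  convert h using 1
  rw [Real.tanh_eq_sinh_div_cosh]
  have hid : Real.cosh x ^ 2 - Real.sinh x ^ 2 = 1 := Real.cosh_sq_sub_sinh_sq x
  field_simp

private lemma tanh_deriv_eq (x : ℝ) : deriv Real.tanh x = 1 - Real.tanh x ^ 2 :=
  (tanh_hasDerivAt x).deriv

private lemma tanh_deriv_eq' (x : ℝ) : deriv Real.tanh x = 1 / Real.cosh x ^ 2 := by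
  rw [tanh_deriv_eq, Real.tanh_eq_sinh_div_cosh]
  have hid : Real.cosh x ^ 2 - Real.sinh x ^ 2 = 1 := Real.cosh_sq_sub_sinh_sq x
  have hc := (Real.cosh_pos x).ne'
  field_simp
  linarith [hid]

private lemma tanh_concaveOn (l u : ℝ) (hl : 0 ≤ l) :
    ConcaveOn ℝ (Set.Icc l u) Real.tanh := by
  apply AntitoneOn.concaveOn_of_deriv (convex_Icc l u)
    (fun x _ => (tanh_hasDerivAt x).differentiableAt.continuousAt.continuousWithinAt)
    (fun x _ => (tanh_hasDerivAt x).differentiableAt.differentiableWithinAt)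
  intro x hx y hy hxy
  rw [interior_Icc] at hx hy
  rw [tanh_deriv_eq', tanh_deriv_eq']
  have hx0 : 0 ≤ x := le_of_lt (lt_of_le_of_lt hl hx.1)
  have hcc : Real.cosh x ≤ Real.cosh y := by
    rw [Real.cosh_le_cosh, abs_of_nonneg hx0, abs_of_nonneg (hx0.trans hxy)]
    exact hxy
  have h1 : (0:ℝ) < Real.cosh x ^ 2 := by positivity
  have h2 : (0:ℝ) < Real.cosh y ^ 2 := by positivity
  apply div_le_div_of_nonneg_left one_pos.le h1
  nlinarith [Real.cosh_pos x, Real.cosh_pos y]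

/-- CROWN linear bounds for a tanh neuron whose pre-activation interval `[l, u]` lies in
`[0, ∞)`: the tangent line at any `d ∈ [l, u]` is an upper bound and the chord through the
endpoints is a lower bound. -/
theorem tanh_crown_bounds_nonneg (l u d : ℝ) (hl : 0 ≤ l) (hlu : l < u)
    (hd : d ∈ Set.Icc l u) :
    ∀ y ∈ Set.Icc l u,
      Real.tanh y ≤ Real.tanh d + (1 - Real.tanh d ^ 2) * (y - d) ∧
      Real.tanh l + ((Real.tanh u - Real.tanh l) / (u - l)) * (y - l) ≤ Real.tanh y := by
  intro y hy
  have hconc := tanh_concaveOn l u hl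
  constructor
  · -- tangent line upper bound
    rcases lt_trichotomy y d with h | h | h
    · have := hconc.le_slope_of_hasDerivAt hy hd h (tanh_hasDerivAt d)
      rw [slope_def_field, le_div_iff₀ (by linarith : 0 < d - y)] at this
      nlinarith
    · subst h; simp
    · have := hconc.slope_le_of_hasDerivAt hd hy h (tanh_hasDerivAt d)
      rw [slope_def_field] at this
      rw [div_le_iff₀ (by linarith : 0 < y - d)] at this
      linarith
  · -- chord lower bound
    rcases eq_or_lt_of_le hy.1 with h | h
    · subst h; simp
    · rcases eq_or_lt_of_le hy.2 with h2 | h2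
      · subst h2
        rw [div_mul_cancel₀ _ (show y - l ≠ 0 by linarith)]
        linarith
      · have hslope := hconc.slope_anti (Set.left_mem_Icc.mpr hlu.le)
        have key := hslope (show y ∈ Set.Icc l u \ {l} from ⟨hy, by simp [h.ne']⟩)
          (show u ∈ Set.Icc l u \ {l} from ⟨Set.right_mem_Icc.mpr hlu.le, by simp [hlu.ne']⟩) h2.le
        rw [slope_def_field, slope_def_field, div_le_div_iff₀ (by linarith) (by linarith)] at key
        rw [div_mul_eq_mul_div]
        have hfin : (Real.tanh u - Real.tanh l) * (y - l) / (u - l) ≤ Real.tanh y - Real.tanh l := by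
          rw [div_le_iff₀ (by linarith : (0:ℝ) < u - l)]
          nlinarith
        linarith
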